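/- Lower bounds for the probability of replacement PRep(k,q). Let q ∈ {1,…,n}. Then: (i) P(⋂_{j=1}^{k} {Y_j = j} ∩ {Y = q}) ≥ 0; (ii) P(⋂_{j=1}^{k} {Y_j = j} ∩ {Y = q}) ≥ Σ_{j=1}^{k} [ P(Y_j = j) + P(X = j) − P(X = j, Y = j) ] + Σ_{k+1 ≤ j ≤ n, j ≠ q} P(X = j, Y = q) + P(X = q, Y = q) − k; and (iii) if moreover q ∈ {1,…,k}, then P(⋂_{j=1}^{k} {Y_j = j} ∩ {Y = q}) ≥ Σ_{1 ≤ j ≤ k, j ≠ q} [ P(Y_j = j) + P(X = j) − P(X = j, Y = j) ] + P(X = q, Y = q) − (k − 1). -/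

import Mathlib

open MeasureTheory

private lemma pair_lb {Ω : Type*} [MeasurableSpace Ω] (P : Measure Ω) [IsProbabilityMeasure P]
    {A B : Set Ω} (hB : MeasurableSet B) :
    (P A).toReal + (P B).toReal - 1 ≤ (P (A ∩ B)).toReal := by
  have h := measure_union_add_inter (μ := P) A hB
  have := congrArg ENNReal.toReal h
  rw [ENNReal.toReal_add (measure_ne_top _ _) (measure_ne_top _ _),
      ENNReal.toReal_add (measure_ne_top _ _) (measure_ne_top _ _)] at this
  have h1 : (P (A ∪ B)).toReal ≤ 1 := by
    have := prob_le_one (μ := P) (s := A ∪ B)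
    simpa using ENNReal.toReal_mono ENNReal.one_ne_top this
  linarith

private lemma union_ie {Ω : Type*} [MeasurableSpace Ω] (P : Measure Ω) [IsProbabilityMeasure P]
    {A B : Set Ω} (hB : MeasurableSet B) :
    (P (A ∪ B)).toReal = (P A).toReal + (P B).toReal - (P (A ∩ B)).toReal := by
  have h := measure_union_add_inter (μ := P) A hB
  have := congrArg ENNReal.toReal h
  rw [ENNReal.toReal_add (measure_ne_top _ _) (measure_ne_top _ _),
      ENNReal.toReal_add (measure_ne_top _ _) (measure_ne_top _ _)] at this
  linarith

private lemma bonferroni {Ω ι : Type*} [MeasurableSpace Ω] (P : Measure Ω)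
    [IsProbabilityMeasure P] (s : Finset ι) (E : ι → Set Ω)
    (hE : ∀ i ∈ s, MeasurableSet (E i)) :
    (∑ i ∈ s, (P (E i)).toReal) - ((s.card : ℝ) - 1) ≤ (P (⋂ i ∈ s, E i)).toReal := by
  classical
  induction s using Finset.induction_on with
  | empty => simp
  | insert a s ha ih =>
    have hEa := hE a (Finset.mem_insert_self a s)
    have hEs : ∀ i ∈ s, MeasurableSet (E i) := fun i hi => hE i (Finset.mem_insert_of_mem hi)
    have hmeas : MeasurableSet (⋂ i ∈ s, E i) := Finset.measurableSet_biInter s hEs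
    have h1 := pair_lb P (A := E a) (B := ⋂ i ∈ s, E i) hmeas
    have h2 := ih hEs
    rw [Finset.set_biInter_insert, Finset.sum_insert ha, Finset.card_insert_of_notMem ha]
    push_cast
    linarith

theorem prep_kq_lower_bounds
    {Ω : Type*} [MeasurableSpace Ω] (P : Measure Ω) [IsProbabilityMeasure P]
    (n k : ℕ) (hk1 : 1 ≤ k) (hkn : k ≤ n)
    (X : Ω → ℕ) (Y : ℕ → Ω → ℕ) (Yobs : Ω → ℕ)
    (hX : Measurable X) (hY : ∀ j, Measurable (Y j))
    (hXr : ∀ ω, X ω ∈ Finset.Icc 1 n)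
    (hYr : ∀ j ω, Y j ω ∈ Finset.Icc 1 n)
    (hcons : ∀ ω, Yobs ω = Y (X ω) ω)
    (q : ℕ) (hq : q ∈ Finset.Icc 1 n) :
    0 ≤ (P ((⋂ j ∈ Finset.Icc 1 k, {ω | Y j ω = j}) ∩ {ω | Yobs ω = q})).toReal ∧
    (∑ j ∈ Finset.Icc 1 k,
        ((P {ω | Y j ω = j}).toReal + (P {ω | X ω = j}).toReal - (P {ω | X ω = j ∧ Yobs ω = j}).toReal))
      + (∑ j ∈ (Finset.Icc (k+1) n).erase q, (P {ω | X ω = j ∧ Yobs ω = q}).toReal)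
      + (P {ω | X ω = q ∧ Yobs ω = q}).toReal - (k : ℝ) ≤ (P ((⋂ j ∈ Finset.Icc 1 k, {ω | Y j ω = j}) ∩ {ω | Yobs ω = q})).toReal ∧
    (q ∈ Finset.Icc 1 k →
      (∑ j ∈ (Finset.Icc 1 k).erase q,
          ((P {ω | Y j ω = j}).toReal + (P {ω | X ω = j}).toReal - (P {ω | X ω = j ∧ Yobs ω = j}).toReal))
        + (P {ω | X ω = q ∧ Yobs ω = q}).toReal - ((k : ℝ) - 1) ≤ (P ((⋂ j ∈ Finset.Icc 1 k, {ω | Y j ω = j}) ∩ {ω | Yobs ω = q})).toReal) := by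
  classical
  set A : Set Ω := (⋂ j ∈ Finset.Icc 1 k, {ω | Y j ω = j}) ∩ {ω | Yobs ω = q} with hA
  -- basic measurable sets
  have mB : ∀ j : ℕ, MeasurableSet {ω | Y j ω = j} :=
    fun j => (hY j) (measurableSet_singleton j)
  have mBq : ∀ j : ℕ, MeasurableSet {ω | Y j ω = q} :=
    fun j => (hY j) (measurableSet_singleton q)
  have mX : ∀ j : ℕ, MeasurableSet {ω | X ω = j} :=
    fun j => hX (measurableSet_singleton j)
  -- rewrite Yobs sets
  have eqJ : ∀ j : ℕ, {ω | X ω = j ∧ Yobs ω = j} = {ω | Y j ω = j} ∩ {ω | X ω = j} := by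
    intro j
    ext ω
    simp only [Set.mem_setOf_eq, Set.mem_inter_iff]
    constructor
    · rintro ⟨hx, hy⟩; rw [hcons, hx] at hy; exact ⟨hy, hx⟩
    · rintro ⟨hy, hx⟩; exact ⟨hx, by rw [hcons, hx]; exact hy⟩
  have eqQ : ∀ j : ℕ, {ω | X ω = j ∧ Yobs ω = q} = {ω | X ω = j} ∩ {ω | Y j ω = q} := by
    intro j
    ext ω
    simp only [Set.mem_setOf_eq, Set.mem_inter_iff]
    constructor
    · rintro ⟨hx, hy⟩; rw [hcons, hx] at hy; exact ⟨hx, hy⟩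
    · rintro ⟨hx, hy⟩; exact ⟨hx, by rw [hcons, hx]; exact hy⟩
  -- the augmented events
  set D : ℕ → Set Ω := fun j => {ω | Y j ω = j} ∪ {ω | X ω = j} with hD
  have mD : ∀ j, MeasurableSet (D j) := fun j => (mB j).union (mX j)
  -- part (i)
  refine ⟨ENNReal.toReal_nonneg, ?_, ?_⟩
  · -- part (ii)
    set T : Finset ℕ := insert q (Finset.Icc (k+1) n) with hT
    set C : Set Ω := ⋃ j ∈ T, ({ω | X ω = j} ∩ {ω | Y j ω = q}) with hC
    have mC : MeasurableSet C := Finset.measurableSet_biUnion T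
      (fun j _ => (mX j).inter (mBq j))
    -- disjointness and measure of C
    have hdisj : (↑T : Set ℕ).PairwiseDisjoint
        (fun j => {ω | X ω = j} ∩ {ω | Y j ω = q}) := by
      intro i _ j _ hij
      refine Set.disjoint_left.2 ?_
      rintro ω ⟨hxi, _⟩ ⟨hxj, _⟩
      exact hij (hxi.symm.trans hxj)
    have hPC : P C = ∑ j ∈ T, P ({ω | X ω = j} ∩ {ω | Y j ω = q}) :=
      measure_biUnion_finset hdisj (fun j _ => (mX j).inter (mBq j))
    have hTins : T = insert q ((Finset.Icc (k+1) n).erase q) := by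
      ext x
      simp only [hT, Finset.mem_insert, Finset.mem_erase]
      tauto
    have hPCsum : (P C).toReal =
        (∑ j ∈ (Finset.Icc (k+1) n).erase q, (P {ω | X ω = j ∧ Yobs ω = q}).toReal)
          + (P {ω | X ω = q ∧ Yobs ω = q}).toReal := by
      rw [hPC, hTins, Finset.sum_insert (Finset.notMem_erase q _)]
      rw [ENNReal.toReal_add (measure_ne_top _ _)
        (by exact (ENNReal.sum_lt_top.2 fun j _ => (measure_lt_top P _)).ne)]
      rw [ENNReal.toReal_sum (fun j _ => measure_ne_top _ _)]
      rw [add_comm]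
      congr 1
      · exact Finset.sum_congr rfl fun j _ => by rw [eqQ j]
      · rw [eqQ q]
    -- inclusion
    have hincl : (⋂ j ∈ Finset.Icc 1 k, D j) ∩ C ⊆ A := by
      rintro ω ⟨hDω, hCω⟩
      simp only [hC, Set.mem_iUnion, Set.mem_inter_iff, Set.mem_setOf_eq] at hCω
      obtain ⟨j0, hj0T, hxj0, hyj0⟩ := hCω
      have hYobs : Yobs ω = q := by rw [hcons, hxj0]; exact hyj0
      have hXok : X ω = q ∨ k + 1 ≤ X ω := by
        rw [hxj0]
        rcases Finset.mem_insert.1 hj0T with h | h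
        · exact Or.inl h
        · exact Or.inr (Finset.mem_Icc.1 h).1
      refine ⟨Set.mem_iInter₂.2 fun j hj => ?_, hYobs⟩
      have hDj := Set.mem_iInter₂.1 hDω j hj
      rcases hDj with h | h
      · exact h
      · -- X ω = j, j ∈ Icc 1 k
        have hjk : j ≤ k := (Finset.mem_Icc.1 hj).2
        have hxj : X ω = j := h
        have hjq : j = q := by
          rcases hXok with h' | h'
          · exact hxj.symm.trans h'
          · omega
        show Y j ω = j
        have hj0j : j0 = j := hxj0.symm.trans hxj
        rw [← hj0j]
        exact hyj0.trans (hj0j.trans hjq).symm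
    -- chain of inequalities
    have hmono : (P ((⋂ j ∈ Finset.Icc 1 k, D j) ∩ C)).toReal ≤ (P A).toReal :=
      ENNReal.toReal_mono (measure_ne_top _ _) (measure_mono hincl)
    have hbonf := bonferroni P (Finset.Icc 1 k) D (fun j _ => mD j)
    have hpair := pair_lb P (A := ⋂ j ∈ Finset.Icc 1 k, D j) (B := C) mC
    have hcard : ((Finset.Icc 1 k).card : ℝ) = (k : ℝ) := by
      rw [Nat.card_Icc]; push_cast; ring
    have hDsum : ∀ j : ℕ, (P (D j)).toReal =
        (P {ω | Y j ω = j}).toReal + (P {ω | X ω = j}).toReal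
          - (P {ω | X ω = j ∧ Yobs ω = j}).toReal := by
      intro j
      rw [eqJ j]
      exact union_ie P (mX j)
    have hsum : ∑ j ∈ Finset.Icc 1 k, (P (D j)).toReal =
        ∑ j ∈ Finset.Icc 1 k,
          ((P {ω | Y j ω = j}).toReal + (P {ω | X ω = j}).toReal
            - (P {ω | X ω = j ∧ Yobs ω = j}).toReal) :=
      Finset.sum_congr rfl fun j _ => hDsum j
    rw [hcard] at hbonf
    linarith [hsum, hPCsum]
  · -- part (iii)
    intro hqk
    set C : Set Ω := {ω | X ω = q} ∩ {ω | Y q ω = q} with hC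
    have mC : MeasurableSet C := (mX q).inter (mBq q)
    have hPCq : (P C).toReal = (P {ω | X ω = q ∧ Yobs ω = q}).toReal := by
      rw [eqQ q]
    have hincl : (⋂ j ∈ (Finset.Icc 1 k).erase q, D j) ∩ C ⊆ A := by
      rintro ω ⟨hDω, hxq, hyq⟩
      rw [Set.mem_setOf_eq] at hxq hyq
      have hYobs : Yobs ω = q := by rw [hcons, hxq]; exact hyq
      refine ⟨Set.mem_iInter₂.2 fun j hj => ?_, hYobs⟩
      by_cases hjq : j = q
      · rw [Set.mem_setOf_eq, hjq]; exact hyq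
      · have hj' : j ∈ (Finset.Icc 1 k).erase q := Finset.mem_erase.2 ⟨hjq, hj⟩
        have hDj := Set.mem_iInter₂.1 hDω j hj'
        rcases hDj with h | h
        · exact h
        · rw [Set.mem_setOf_eq] at h
          exact absurd (h.symm.trans hxq) hjq
    have hmono : (P ((⋂ j ∈ (Finset.Icc 1 k).erase q, D j) ∩ C)).toReal ≤ (P A).toReal :=
      ENNReal.toReal_mono (measure_ne_top _ _) (measure_mono hincl)
    have hbonf := bonferroni P ((Finset.Icc 1 k).erase q) D (fun j _ => mD j)
    have hpair := pair_lb P (A := ⋂ j ∈ (Finset.Icc 1 k).erase q, D j) (B := C) mC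
    have hcard : ((((Finset.Icc 1 k).erase q).card : ℕ) : ℝ) = (k : ℝ) - 1 := by
      rw [Finset.card_erase_of_mem hqk, Nat.card_Icc]
      have : k + 1 - 1 - 1 = k - 1 := by omega
      rw [this, Nat.cast_sub hk1]
      push_cast; ring
    have hDsum : ∀ j : ℕ, (P (D j)).toReal =
        (P {ω | Y j ω = j}).toReal + (P {ω | X ω = j}).toReal
          - (P {ω | X ω = j ∧ Yobs ω = j}).toReal := by
      intro j
      rw [eqJ j]
      exact union_ie P (mX j)
    have hsum : ∑ j ∈ (Finset.Icc 1 k).erase q, (P (D j)).toReal =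
        ∑ j ∈ (Finset.Icc 1 k).erase q,
          ((P {ω | Y j ω = j}).toReal + (P {ω | X ω = j}).toReal
            - (P {ω | X ω = j ∧ Yobs ω = j}).toReal) :=
      Finset.sum_congr rfl fun j _ => hDsum j
    rw [hcard] at hbonf
    linarith [hsum, hPCq]
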